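/- Let Γ be a finite tree (a connected acyclic simple graph) whose vertices are colored by a function c into a set of colors, and suppose: (1) no two adjacent vertices of Γ have the same color; (2) for any two vertices v and w with c(v) = c(w) and any color d, if some neighbor of v has color d then some neighbor of w also has color d. Then any two vertices of the same color are an even distance apart in Γ, i.e. if c(v) = c(w) then the graph distance dist(v, w) is even. -/

import Mathlib

open SimpleGraph

section Aux

variable {V : Type*} {G : SimpleGraph V}

/-- In a connected graph, from a vertex at distance `m+1` of `b` there is a
neighbor at distance `m` of `b`. -/
private lemma tree_first_step (hc : G.Connected) {a b : V} {m : ℕ}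
    (h : G.dist a b = m + 1) : ∃ a', G.Adj a a' ∧ G.dist a' b = m := by
  obtain ⟨p, hp⟩ := hc.exists_walk_length_eq_dist a b
  cases p with
  | nil => simp at h
  | @cons _ x _ hadj q =>
    refine ⟨x, hadj, le_antisymm ?_ ?_⟩
    · have : q.length = m := by
        have := hp
        rw [SimpleGraph.Walk.length_cons, h] at this
        omega
      calc G.dist x b ≤ q.length := G.dist_le q
        _ = m := this
    · have t := hc.dist_triangle (u := a) (v := x) (w := b)
      have hax : G.dist a x ≤ 1 := by
        simpa using G.dist_le (SimpleGraph.Walk.cons hadj SimpleGraph.Walk.nil)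
      omega

/-- In a tree, two adjacent vertices are at different distances from any vertex. -/
private lemma tree_adj_dist_ne (hT : G.IsTree) {a b : V} (h : G.Adj a b) (x : V) :
    G.dist x a ≠ G.dist x b := by
  classical
  intro hax
  set m := G.dist x b with hm
  -- shortest path from a to x
  obtain ⟨p, hpp, hpl⟩ := hT.isConnected.exists_path_of_dist a x
  have hpl' : p.length = m := by rw [hpl, SimpleGraph.dist_comm]; exact hax.symm ▸ rfl
  by_cases hb : b ∈ p.support
  · -- then the length of the prefix up to b is 0, forcing a = b
    have hdu : G.dist b x ≤ (p.dropUntil b hb).length := G.dist_le _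
    have hsum := congr_arg SimpleGraph.Walk.length (p.take_spec hb)
    rw [SimpleGraph.Walk.length_append] at hsum
    have hbx : G.dist b x = m := by rw [SimpleGraph.dist_comm]
    have htk : (p.takeUntil b hb).length = 0 := by omega
    have : a = b := SimpleGraph.Walk.eq_of_length_eq_zero htk
    exact h.ne this
  · -- otherwise `cons h p` is a path from b to x of length m+1
    have hw : (SimpleGraph.Walk.cons h.symm p).IsPath := hpp.cons hb
    obtain ⟨q, hqp, hql⟩ := hT.isConnected.exists_path_of_dist b x
    have hql' : q.length = m := by rw [hql, SimpleGraph.dist_comm]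
    have := hT.IsAcyclic.path_unique ⟨SimpleGraph.Walk.cons h.symm p, hw⟩ ⟨q, hqp⟩
    have hwq : (SimpleGraph.Walk.cons h.symm p) = q := congrArg Subtype.val this
    have : (SimpleGraph.Walk.cons h.symm p).length = m := hwq ▸ hql'
    rw [SimpleGraph.Walk.length_cons, hpl'] at this
    omega

/-- In a tree, if `b'` is a neighbor of `b` strictly closer to `x`, then the unique
path from `b` to `x` passes through `b'` as its second vertex. -/
private lemma tree_second_vertex (hT : G.IsTree) {x b b' : V} {m : ℕ}
    (h : G.Adj b b') (hd' : G.dist x b' = m) (hd : G.dist x b = m + 1) :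
    ∃ w : G.Walk b x, w.IsPath ∧ w.getVert 1 = b' := by
  classical
  obtain ⟨p, hpp, hpl⟩ := hT.isConnected.exists_path_of_dist b' x
  have hpl' : p.length = m := by rw [hpl, SimpleGraph.dist_comm, hd']
  have hb : b ∉ p.support := by
    intro hb
    have hdu : G.dist b x ≤ (p.dropUntil b hb).length := G.dist_le _
    have hle : (p.dropUntil b hb).length ≤ p.length := p.length_dropUntil_le hb
    rw [SimpleGraph.dist_comm] at hd
    omega
  refine ⟨SimpleGraph.Walk.cons h p, hpp.cons hb, ?_⟩
  simp [SimpleGraph.Walk.getVert_cons_succ]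

/-- In a tree, the neighbor strictly closer to `x` is unique. -/
private lemma tree_closer_unique (hT : G.IsTree) {x b b₁ b₂ : V} {m : ℕ}
    (h1 : G.Adj b b₁) (h2 : G.Adj b b₂)
    (d1 : G.dist x b₁ = m) (d2 : G.dist x b₂ = m) (db : G.dist x b = m + 1) :
    b₁ = b₂ := by
  obtain ⟨w₁, hw₁, hg₁⟩ := tree_second_vertex hT h1 d1 db
  obtain ⟨w₂, hw₂, hg₂⟩ := tree_second_vertex hT h2 d2 db
  have := hT.IsAcyclic.path_unique ⟨w₁, hw₁⟩ ⟨w₂, hw₂⟩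
  have hww : w₁ = w₂ := congrArg Subtype.val this
  rw [← hg₁, ← hg₂, hww]

/-- Distances in a finite connected graph are less than the number of vertices. -/
private lemma tree_dist_lt [Fintype V] (hc : G.Connected) (x y : V) :
    G.dist x y < Fintype.card V := by
  obtain ⟨p, hpp, hpl⟩ := hc.exists_path_of_dist x y
  rw [← hpl]
  exact hpp.length_lt

end Aux

/-- Let `Γ` be a finite tree whose vertices are colored by `c`, such that
(1) no two adjacent vertices have the same color, and
(2) if `v` and `w` have the same color and some neighbor of `v` has color `d`,
then some neighbor of `w` also has color `d`.
Then any two vertices of the same color are an even distance apart in `Γ`. -/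
theorem stmt1 {V C : Type*} [Fintype V] (Γ : SimpleGraph V) (hΓ : Γ.IsTree)
    (c : V → C)
    (h1 : ∀ v w : V, Γ.Adj v w → c v ≠ c w)
    (h2 : ∀ v w : V, c v = c w → ∀ d : C,
      (∃ u : V, Γ.Adj v u ∧ c u = d) → ∃ u : V, Γ.Adj w u ∧ c u = d) :
    ∀ v w : V, c v = c w → Even (Γ.dist v w) := by
  classical
  have hc := hΓ.isConnected
  intro v w hvw
  by_contra hodd
  rw [Nat.not_even_iff_odd] at hodd
  -- take a minimal odd distance realized by a same-colored pair
  set Pred : ℕ → Prop := fun n => Odd n ∧ ∃ a b : V, c a = c b ∧ Γ.dist a b = n with hPreddef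
  have hex : ∃ n, Pred n := ⟨Γ.dist v w, hodd, v, w, hvw, rfl⟩
  obtain ⟨hnodd, r, b0, hab0, hd0⟩ := Nat.find_spec hex
  set n := Nat.find hex with hn
  have hmin : ∀ m, m < n → ¬ Pred m := fun m hm => Nat.find_min hex hm
  have hn1 : n ≠ 1 := by
    intro h
    have : Γ.Adj r b0 := by
      rw [← SimpleGraph.dist_eq_one_iff_adj]; rw [hd0, h]
    exact h1 r b0 this hab0
  have hn0 : n ≠ 0 := by
    intro h
    rw [h] at hnodd
    have := Nat.odd_iff.mp hnodd
    omega
  have hn3 : 3 ≤ n := by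
    have := Nat.odd_iff.mp hnodd
    omega
  -- key induction: we can find same-colored pairs at distance n with the second
  -- vertex arbitrarily far from r
  have key : ∀ k : ℕ, ∃ a b : V, c a = c b ∧ Γ.dist a b = n ∧
      Γ.dist r a = k ∧ Γ.dist r b = n + k := by
    intro k
    induction k with
    | zero => exact ⟨r, b0, hab0, hd0, by simp, by simpa using hd0⟩
    | succ k ih =>
      obtain ⟨a, b, hab, hdn, hra, hrb⟩ := ih
      -- step from a toward b
      have hdn' : Γ.dist a b = (n - 1) + 1 := by omega
      obtain ⟨a', haa', ha'b⟩ := tree_first_step hc hdn'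
      have hda : Γ.dist a a' = 1 := by
        rw [SimpleGraph.dist_eq_one_iff_adj]; exact haa'
      -- dist r a' = k + 1
      have hra'le : Γ.dist r a' ≤ k + 1 := by
        have := hc.dist_triangle (u := r) (v := a) (w := a')
        omega
      have hra'ge : k + 1 ≤ Γ.dist r a' := by
        have := hc.dist_triangle (u := r) (v := a') (w := b)
        omega
      have hra' : Γ.dist r a' = k + 1 := le_antisymm hra'le hra'ge
      -- b has a neighbor b' of color c a'
      obtain ⟨b', hbb', hcb'⟩ := h2 a b hab (c a') ⟨a', haa', rfl⟩
      have hdb : Γ.dist b b' = 1 := by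
        rw [SimpleGraph.dist_eq_one_iff_adj]; exact hbb'
      -- dist a' b' is n - 2 or n
      have ht1 : Γ.dist a' b' ≤ Γ.dist a' b + 1 := by
        have := hc.dist_triangle (u := a') (v := b) (w := b')
        omega
      have ht2 : Γ.dist a' b ≤ Γ.dist a' b' + 1 := by
        have := hc.dist_triangle (u := a') (v := b') (w := b)
        have hdb' : Γ.dist b' b = 1 := by rw [SimpleGraph.dist_comm]; exact hdb
        omega
      have htne : Γ.dist a' b ≠ Γ.dist a' b' := tree_adj_dist_ne hΓ hbb' a'
      have hcase : Γ.dist a' b' = n - 2 ∨ Γ.dist a' b' = n := by omega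
      have hdab' : Γ.dist a' b' = n := by
        rcases hcase with hcase | hcase
        · exfalso
          refine hmin (n - 2) (by omega) ⟨?_, a', b', hcb'.symm, hcase⟩
          rw [Nat.odd_iff] at hnodd ⊢
          omega
        · exact hcase
      -- dist r b' is n + k - 1 or n + k + 1
      have hs1 : Γ.dist r b' ≤ n + k + 1 := by
        have := hc.dist_triangle (u := r) (v := b) (w := b')
        omega
      have hs2 : Γ.dist r b ≤ Γ.dist r b' + 1 := by
        have := hc.dist_triangle (u := r) (v := b') (w := b)
        have hdb' : Γ.dist b' b = 1 := by rw [SimpleGraph.dist_comm]; exact hdb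
        omega
      have hsne : Γ.dist r b ≠ Γ.dist r b' := tree_adj_dist_ne hΓ hbb' r
      have hscase : Γ.dist r b' = n + k - 1 ∨ Γ.dist r b' = n + k + 1 := by omega
      have hrb' : Γ.dist r b' = n + k + 1 := by
        rcases hscase with hscase | hscase
        · exfalso
          -- then b' would be the unique neighbor of b toward r,
          -- which lies at distance n-2 from a', contradiction
          have hba' : Γ.dist b a' = (n - 2) + 1 := by
            rw [SimpleGraph.dist_comm]; omega
          obtain ⟨u, hbu, hua'⟩ := tree_first_step hc hba'
          have hua'' : Γ.dist a' u = n - 2 := by rw [SimpleGraph.dist_comm]; exact hua'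
          have hru_le : Γ.dist r u ≤ n + k - 1 := by
            have := hc.dist_triangle (u := r) (v := a') (w := u)
            omega
          have hru_ge : n + k - 1 ≤ Γ.dist r u := by
            have := hc.dist_triangle (u := r) (v := u) (w := b)
            have hub : Γ.dist u b = 1 := by
              rw [SimpleGraph.dist_eq_one_iff_adj]; exact hbu.symm
            omega
          have hru : Γ.dist r u = n + k - 1 := le_antisymm hru_le hru_ge
          have hrb'' : Γ.dist r b = (n + k - 1) + 1 := by omega
          have : u = b' :=
            tree_closer_unique hΓ hbu hbb' hru (by omega) hrb''
          rw [this] at hua''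
          omega
        · exact hscase
      exact ⟨a', b', hcb'.symm, hdab', hra', by omega⟩
  -- contradiction: distances are bounded by the number of vertices
  obtain ⟨a, b, _, _, _, hrb⟩ := key (Fintype.card V)
  have := tree_dist_lt hc r b
  omega
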